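/- Let F be a field and O the split octonion algebra over F. For every u ∈ F³, the map δ₁(u) : O → O defined by (α', u', v', β') ↦ (α' − u·v', (α' − β' − u·v')u + u', v' − u'×u, β' + u·v') is an F-algebra automorphism of O, i.e. an F-linear bijection satisfying δ₁(u)(a b) = δ₁(u)(a) δ₁(u)(b) for all a, b ∈ O. -/
import Mathlib


namespace OctoPaper

variable (F : Type*) [Field F]

/-- The split (Zorn matrix) octonion algebra over `F`. -/
structure Octo where
  x1 : F
  u : Fin 3 → F
  v : Fin 3 → F
  x8 : F

variable {F}

/-- Dot product on `F³`. -/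
def dot (u v : Fin 3 → F) : F := u 0 * v 0 + u 1 * v 1 + u 2 * v 2

/-- Cross product on `F³`. -/
def cross (u v : Fin 3 → F) : Fin 3 → F :=
  ![u 1 * v 2 - u 2 * v 1, u 2 * v 0 - u 0 * v 2, u 0 * v 1 - u 1 * v 0]

instance : Mul (Octo F) where
  mul x y :=
    ⟨x.x1 * y.x1 + dot x.u y.v,
     fun i => x.x1 * y.u i + y.x8 * x.u i - cross x.v y.v i,
     fun i => y.x1 * x.v i + x.x8 * y.v i + cross x.u y.u i,
     x.x8 * y.x8 + dot x.v y.u⟩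

instance : Add (Octo F) where add x y := ⟨x.x1 + y.x1, x.u + y.u, x.v + y.v, x.x8 + y.x8⟩
instance : Neg (Octo F) where neg x := ⟨-x.x1, -x.u, -x.v, -x.x8⟩
instance : Sub (Octo F) where sub x y := x + -y
instance : SMul F (Octo F) where smul c x := ⟨c * x.x1, c • x.u, c • x.v, c * x.x8⟩
instance : One (Octo F) where one := ⟨1, 0, 0, 1⟩
instance : Zero (Octo F) where zero := ⟨0, 0, 0, 0⟩

/-- Trace of an octonion. -/
def tr (x : Octo F) : F := x.x1 + x.x8

/-- Norm of an octonion. -/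
def onorm (x : Octo F) : F := x.x1 * x.x8 - dot x.u x.v

/-- Conjugate of an octonion. -/
def conj (x : Octo F) : Octo F := ⟨x.x8, -x.u, -x.v, x.x1⟩

/-- `g` is an `F`-algebra automorphism of the split octonion algebra:
an `F`-linear bijection preserving multiplication. -/
def IsAut (g : Octo F → Octo F) : Prop :=
  Function.Bijective g ∧
  (∀ x y : Octo F, g (x + y) = g x + g y) ∧
  (∀ (c : F) (x : Octo F), g (c • x) = c • g x) ∧
  (∀ x y : Octo F, g (x * y) = g x * g y)

/-- The automorphism `ρ(g)` of `O` attached to `g ∈ SL₃(F)`. -/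
def rho (g : Matrix.SpecialLinearGroup (Fin 3) F) (x : Octo F) : Octo F :=
  ⟨x.x1, Matrix.vecMul x.u (g : Matrix (Fin 3) (Fin 3) F),
   Matrix.vecMul x.v (Matrix.transpose (↑(g⁻¹) : Matrix (Fin 3) (Fin 3) F)), x.x8⟩

/-- The automorphism `ℏ` of `O`. -/
def hbar (x : Octo F) : Octo F := ⟨x.x8, -x.v, -x.u, x.x1⟩

/-- The automorphism `δ₁(u)` of `O`. -/
def delta1 (w : Fin 3 → F) (y : Octo F) : Octo F :=
  ⟨y.x1 - dot w y.v,
   fun i => (y.x1 - y.x8 - dot w y.v) * w i + y.u i,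
   fun i => y.v i - cross y.u w i,
   y.x8 + dot w y.v⟩

/-- The automorphism `δ₂(v)` of `O`. -/
def delta2 (w : Fin 3 → F) (y : Octo F) : Octo F :=
  ⟨y.x1 + dot y.u w,
   fun i => y.u i + cross y.v w i,
   fun i => (-y.x1 + y.x8 - dot y.u w) * w i + y.v i,
   y.x8 - dot y.u w⟩

end OctoPaper

open OctoPaper

section Aux
variable {F : Type*} [Field F]

lemma octo_ext {x y : Octo F} (h1 : x.x1 = y.x1)
    (h2 : x.u = y.u) (h3 : x.v = y.v) (h4 : x.x8 = y.x8) : x = y := by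
  cases x; cases y; simp_all

lemma mul_def (x y : Octo F) : x * y =
    ⟨x.x1 * y.x1 + dot x.u y.v,
     fun i => x.x1 * y.u i + y.x8 * x.u i - cross x.v y.v i,
     fun i => y.x1 * x.v i + x.x8 * y.v i + cross x.u y.u i,
     x.x8 * y.x8 + dot x.v y.u⟩ := rfl

lemma add_def (x y : Octo F) : x + y = ⟨x.x1 + y.x1, x.u + y.u, x.v + y.v, x.x8 + y.x8⟩ := rfl

lemma smul_def (c : F) (x : Octo F) : c • x = ⟨c * x.x1, c • x.u, c • x.v, c * x.x8⟩ := rfl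

lemma delta1_inv (u : Fin 3 → F) (y : Octo F) :
    delta1 u (delta1 (-u) y) = y := by
  apply octo_ext
  · simp [delta1, dot, cross]; ring
  · funext i; fin_cases i <;> · simp [delta1, dot, cross]; ring
  · funext i; fin_cases i <;> · simp [delta1, dot, cross]; ring
  · simp [delta1, dot, cross]; ring

lemma delta1_inv' (u : Fin 3 → F) (y : Octo F) :
    delta1 (-u) (delta1 u y) = y := by
  have := delta1_inv (-u) y; simpa using this

end Aux

set_option maxHeartbeats 1000000 in
/-- For every `u ∈ F³` the map `δ₁(u)` is an `F`-algebra automorphism of the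
split octonions. -/
theorem delta1_isAut (F : Type*) [Field F] (u : Fin 3 → F) :
    IsAut (delta1 u : Octo F → Octo F) := by
  refine ⟨⟨Function.LeftInverse.injective (g := delta1 (-u)) (delta1_inv' u),
    Function.RightInverse.surjective (g := delta1 (-u)) (delta1_inv u)⟩, ?_, ?_, ?_⟩
  · intro x y
    apply octo_ext
    · simp [delta1, add_def, dot]; ring
    · funext i; fin_cases i <;> · simp [delta1, add_def, dot, cross]; ring
    · funext i; fin_cases i <;> · simp [delta1, add_def, dot, cross]; ring
    · simp [delta1, add_def, dot]; ring
  · intro c x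
    apply octo_ext
    · simp [delta1, smul_def, dot]; ring
    · funext i; fin_cases i <;> · simp [delta1, smul_def, dot, cross]; ring
    · funext i; fin_cases i <;> · simp [delta1, smul_def, dot, cross]; ring
    · simp [delta1, smul_def, dot]; ring
  · intro x y
    apply octo_ext
    · simp [delta1, mul_def, dot, cross]; ring
    · simp only [delta1, mul_def, dot]
      funext i; fin_cases i <;> · simp [cross]; ring
    · simp only [delta1, mul_def, dot]
      funext i; fin_cases i <;> · simp [cross]; ring
    · simp [delta1, mul_def, dot, cross]; ring
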